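/- Let q = p^e with either p an odd prime and q ≠ 5, or p = 2 and e ≥ 3. Let Ω_q ⊆ F_q^* be QR_q := {x² : x ∈ F_q^*} when p is odd, and W_q := {ω^{2i} : 0 ≤ i ≤ 2^{e−1} − 2} for a primitive ω ∈ F_q^* with Tr(ω^{-1}) = 0 when p = 2. Let r : Ω_q → F_q^* with r(γ)² = γ for all γ, and let a ∈ Ω_q ∩ B_1(1) and b ∈ (F_q^* \ Ω_q) ∩ B_1(1) be such that for every δ ∈ Ω_q, |⋃_{γ ∈ Ω_q, γ ≠ δ} {r(γ)·a, r(γ)·b}| equals q − 3 (p odd) or q − 4 (p = 2). Let t be a positive integer and V_1,…,V_t ⊆ F_q, and suppose this sequence defines a t-valid pQM scheme: for every transcript b ∈ {0,1}^t, setting W_i := V_i if b_i = 0 and W_i := F_q^* \ V_i if b_i = 1 and S_γ(b) := B_1(1) \ ⋃_{i=1}^t r(γ)^{-1}·W_i for γ ∈ Ω_q, at most one γ ∈ Ω_q satisfies S_γ(b) ≠ ∅. Then t ≥ 2·log₂(q−1) − 3 when p is odd, and t ≥ 2·log₂(q−2) − 4 when p = 2. -/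

import Mathlib

/-- The absolute trace `Tr(x) = x + x^p + ⋯ + x^{p^{e-1}}` of `F_{p^e}`,
viewed as taking values in `F` (its values lie in the prime subfield). -/
def Tr (p e : ℕ) {F : Type*} [Field F] (x : F) : F :=
  ∑ w ∈ Finset.range e, x ^ p ^ w

/-- The set `B_1(1) = { m + m⁻¹ : m ∈ F_q^* }`. -/
def B11 (F : Type*) [Field F] : Set F :=
  {y : F | ∃ m : F, m ≠ 0 ∧ y = m + m⁻¹}

/-- The quadratic residues `QR_q = { x² : x ∈ F_q^* }`. -/
def QR (F : Type*) [Field F] : Set F :=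
  {y : F | ∃ x : F, x ≠ 0 ∧ y = x ^ 2}

/-- `W_q = { ω^{2i} : 0 ≤ i ≤ 2^{e-1} - 2 }`. -/
def Wset (F : Type*) [Field F] (e : ℕ) (ω : F) : Set F :=
  {y : F | ∃ i : ℕ, i ≤ 2 ^ (e - 1) - 2 ∧ y = ω ^ (2 * i)}

/-- The final state `S_γ(b)` of the pQM pruning algorithm with leakage sets `V_1,…,V_t`,
transcript `bv ∈ {0,1}^t`, and square root `rγ` of `γ`:
`S_γ = B_1(1) \ ⋃_i rγ⁻¹·W_i`, where `W_i = V_i` if `bv i = 0` and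
`W_i = F_q^* \ V_i` if `bv i = 1`. -/
def finalState {F : Type*} [Field F] {t : ℕ} (rγ : F) (V : Fin t → Set F)
    (bv : Fin t → Bool) : Set F :=
  B11 F \ ⋃ i : Fin t,
    (fun x => rγ⁻¹ * x) '' (if bv i then {x : F | x ≠ 0} \ V i else V i)

set_option maxHeartbeats 1600000

lemma mem_finalState_iff {F : Type*} [Field F] {t : ℕ} {rγ : F} (hrγ : rγ ≠ 0)
    {V : Fin t → Set F} {bv : Fin t → Bool} {m : F} :
    m ∈ finalState rγ V bv ↔ m ∈ B11 F ∧
      ∀ i, rγ * m ∉ (if bv i then {x : F | x ≠ 0} \ V i else V i) := by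
  unfold finalState
  constructor
  · rintro ⟨hB, hU⟩
    refine ⟨hB, fun i hin => hU ?_⟩
    exact Set.mem_iUnion.mpr ⟨i, ⟨rγ * m, hin, by simp [inv_mul_cancel_left₀ hrγ]⟩⟩
  · rintro ⟨hB, h2⟩
    refine ⟨hB, fun hU => ?_⟩
    obtain ⟨i, w, hw, hwm⟩ := Set.mem_iUnion.mp hU
    apply h2 i
    have hww : w = rγ * m := by rw [← hwm, mul_inv_cancel_left₀ hrγ]
    rwa [hww] at hw

lemma add_inv_fiber {F : Type*} [Field F] {u v : F} (hu : u ≠ 0) (hv : v ≠ 0)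
    (h : u + u⁻¹ = v + v⁻¹) : u = v ∨ u = v⁻¹ := by
  have h1 : (u + u⁻¹) * (u * v) = (v + v⁻¹) * (u * v) := by rw [h]
  have e1 : (u + u⁻¹) * (u * v) = u ^ 2 * v + v := by field_simp
  have e2 : (v + v⁻¹) * (u * v) = v ^ 2 * u + u := by field_simp
  rw [e1, e2] at h1
  have h3 : (u - v) * (u * v - 1) = 0 := by linear_combination h1
  rcases mul_eq_zero.mp h3 with h4 | h4
  · exact Or.inl (sub_eq_zero.mp h4)
  · exact Or.inr (eq_inv_of_mul_eq_one_left (by linear_combination h4))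

lemma card_le_two_mul_of_fibers {α β : Type*} [DecidableEq β]
    (s : Finset α) (f : α → β) (T : Finset β) (g : α → α)
    (hmap : ∀ x ∈ s, f x ∈ T)
    (hfib : ∀ x ∈ s, ∀ y ∈ s, f x = f y → y = x ∨ y = g x) :
    s.card ≤ 2 * T.card := by
  classical
  have h1 : s.card ≤ 2 * (s.image f).card := by
    apply Finset.card_le_mul_card_image
    intro b hb
    obtain ⟨x0, hx0, rfl⟩ := Finset.mem_image.mp hb
    have hsub : s.filter (fun x => f x = f x0) ⊆ {x0, g x0} := by
      intro y hy
      obtain ⟨hys, hyf⟩ := Finset.mem_filter.mp hy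
      rcases hfib x0 hx0 y hys hyf.symm with h | h <;> simp [h]
    refine le_trans (Finset.card_le_card hsub) ?_
    refine le_trans (Finset.card_insert_le _ _) ?_
    simp
  refine le_trans h1 (Nat.mul_le_mul_left 2 ?_)
  exact Finset.card_le_card (Finset.image_subset_iff.mpr hmap)

/-- If the leakage sets `V_1,…,V_t` define a `t`-valid pQM scheme
(for every transcript, at most one `γ ∈ Ω_q` has a nonempty final state), then
`t ≥ 2·log₂(q−1) − 3` when `p` is odd, and `t ≥ 2·log₂(q−2) − 4` when `p = 2`. -/
theorem pQM_round_complexity_lower_bound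
    (F : Type*) [Field F] [Fintype F] (p e : ℕ) (hp : p.Prime)
    (hcard : Fintype.card F = p ^ e)
    (hcase : (Odd p ∧ p ^ e ≠ 5) ∨ (p = 2 ∧ 3 ≤ e))
    (Ω : Set F)
    (hΩodd : Odd p → Ω = QR F)
    (hΩeven : p = 2 → ∃ ω : F, orderOf ω = p ^ e - 1 ∧ Tr p e ω⁻¹ = 0 ∧ Ω = Wset F e ω)
    (r : F → F) (hr : ∀ γ ∈ Ω, r γ ≠ 0 ∧ (r γ) ^ 2 = γ)
    (a b : F) (ha : a ∈ Ω) (haB : a ∈ B11 F)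
    (hb : b ≠ 0) (hbΩ : b ∉ Ω) (hbB : b ∈ B11 F)
    (hunion : ∀ δ ∈ Ω,
      (Odd p → (⋃ γ ∈ Ω \ {δ}, ({r γ * a, r γ * b} : Set F)).ncard = p ^ e - 3) ∧
      (p = 2 → (⋃ γ ∈ Ω \ {δ}, ({r γ * a, r γ * b} : Set F)).ncard = p ^ e - 4))
    (t : ℕ) (ht : 0 < t)
    (V : Fin t → Set F)
    (hvalid : ∀ bv : Fin t → Bool, ∀ γ ∈ Ω, ∀ γ' ∈ Ω,
      finalState (r γ) V bv ≠ ∅ → finalState (r γ') V bv ≠ ∅ → γ = γ') :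
    (Odd p → 2 * Real.logb 2 ((p : ℝ) ^ e - 1) - 3 ≤ (t : ℝ)) ∧
    (p = 2 → 2 * Real.logb 2 ((p : ℝ) ^ e - 2) - 4 ≤ (t : ℝ)) := by
  classical
  -- basic numerics
  have hq2 : 2 ≤ p ^ e := hcard ▸ Fintype.one_lt_card
  have he1 : 1 ≤ e := by
    by_contra h
    push_neg at h
    interval_cases e
    simp at hq2
  have hpF : (p : F) = 0 := by
    have h0 : ((p ^ e : ℕ) : F) = 0 := by rw [← hcard]; exact FiniteField.cast_card_eq_zero F
    push_cast at h0
    exact (pow_eq_zero_iff (by omega)).mp h0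
  haveI : CharP F (ringChar F) := ringChar.charP F
  have hrprime : (ringChar F).Prime := CharP.char_is_prime F (ringChar F)
  have hrp : ringChar F = p := by
    have hdvd : ringChar F ∣ p := (CharP.cast_eq_zero_iff F (ringChar F) p).mp hpF
    exact (Nat.prime_dvd_prime_iff_eq hrprime hp).mp hdvd
  have h2ne : Odd p → (2 : F) ≠ 0 := by
    intro hodd h2
    have hdvd : ringChar F ∣ 2 := by
      have h2' : ((2 : ℕ) : F) = 0 := by exact_mod_cast h2
      exact (CharP.cast_eq_zero_iff F (ringChar F) 2).mp h2'
    rw [hrp] at hdvd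
    have hp2 : p = 2 := (Nat.prime_dvd_prime_iff_eq hp Nat.prime_two).mp hdvd
    rw [hp2, Nat.odd_iff] at hodd
    omega
  have h4ne : Odd p → (4 : F) ≠ 0 := by
    intro hodd h4
    have hdvd : ringChar F ∣ 4 := by
      have h4' : ((4 : ℕ) : F) = 0 := by exact_mod_cast h4
      exact (CharP.cast_eq_zero_iff F (ringChar F) 4).mp h4'
    rw [hrp] at hdvd
    have hdvd2 : p ∣ 2 ^ 2 := by norm_num at hdvd ⊢; exact hdvd
    have hdvd3 : p ∣ 2 := hp.dvd_of_dvd_pow hdvd2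
    have hp2 : p = 2 := (Nat.prime_dvd_prime_iff_eq hp Nat.prime_two).mp hdvd3
    rw [hp2, Nat.odd_iff] at hodd
    omega
  have h2eq : p = 2 → (2 : F) = 0 := by
    intro h
    have := hpF
    rw [h] at this
    exact_mod_cast this
  have ha0 : a ≠ 0 := by
    have h := hr a ha
    rw [← h.2]
    exact pow_ne_zero 2 h.1
  have hab : a ≠ b := fun h => hbΩ (h ▸ ha)
  -- survival and uniqueness lemmas
  have hsurv : ∀ γ, r γ ≠ 0 → ∀ m, m ∈ B11 F → m ≠ 0 →
      m ∈ finalState (r γ) V (fun i => decide (r γ * m ∈ V i)) := by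
    intro γ hrγ m hm hm0
    rw [mem_finalState_iff hrγ]
    refine ⟨hm, fun i => ?_⟩
    by_cases hxV : r γ * m ∈ V i <;> simp [hxV]
  have hbvdet : ∀ γ, r γ ≠ 0 → ∀ bv m, m ∈ finalState (r γ) V bv → m ≠ 0 →
      bv = fun i => decide (r γ * m ∈ V i) := by
    intro γ hrγ bv m hm hm0
    have hx0 : r γ * m ≠ 0 := mul_ne_zero hrγ hm0
    obtain ⟨-, h2⟩ := (mem_finalState_iff hrγ).mp hm
    funext i
    have hi := h2 i
    by_cases hxV : r γ * m ∈ V i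
    · cases hbvi : bv i
      · rw [hbvi] at hi
        simp only [Bool.false_eq_true, if_false] at hi
        exact absurd hxV hi
      · simp [hxV]
    · cases hbvi : bv i
      · simp [hxV]
      · rw [hbvi] at hi
        simp only [if_true] at hi
        exact absurd ⟨hx0, hxV⟩ hi
  have huniq : ∀ bv : Fin t → Bool, ∀ γ ∈ Ω, ∀ γ' ∈ Ω, ∀ m m' : F,
      m ∈ finalState (r γ) V bv → m' ∈ finalState (r γ') V bv → γ = γ' := by
    intro bv γ hγ γ' hγ' m m' hm hm'
    exact hvalid bv γ hγ γ' hγ' (Set.nonempty_iff_ne_empty.mp ⟨m, hm⟩)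
      (Set.nonempty_iff_ne_empty.mp ⟨m', hm'⟩)
  have hcross : ∀ γ ∈ Ω, ∀ γ' ∈ Ω, ∀ bv : Fin t → Bool, ∀ m m' : F,
      m ∈ finalState (r γ) V bv → m ≠ 0 →
      m' ∈ B11 F → m' ≠ 0 → r γ * m = r γ' * m' → γ = γ' ∧ m = m' := by
    intro γ hγ γ' hγ' bv m m' hm hm0 hm'B hm'0 heq
    have hrγ := (hr γ hγ).1
    have hrγ' := (hr γ' hγ').1
    have h1 : bv = fun i => decide (r γ * m ∈ V i) := hbvdet γ hrγ bv m hm hm0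
    have h2 : m' ∈ finalState (r γ') V bv := by
      rw [h1]
      have hs := hsurv γ' hrγ' m' hm'B hm'0
      rwa [← heq] at hs
    have hγγ' : γ = γ' := huniq bv γ hγ γ' hγ' m m' hm h2
    refine ⟨hγγ', mul_left_cancel₀ hrγ ?_⟩
    rw [heq, hγγ']
  -- the big union U and the exceptional set E'
  set U : Set F := ⋃ γ ∈ Ω \ {a}, ({r γ * a, r γ * b} : Set F) with hUdef
  have hUmem : ∀ x, x ∈ U ↔ ∃ γ, (γ ∈ Ω ∧ γ ≠ a) ∧ (x = r γ * a ∨ x = r γ * b) := by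
    intro x
    rw [hUdef]
    simp only [Set.mem_iUnion, Set.mem_diff, Set.mem_singleton_iff, Set.mem_insert_iff,
      exists_prop]
  have hnotU : ∀ m₀, m₀ ∈ B11 F → m₀ ≠ 0 → r a * m₀ ∉ U := by
    intro m₀ hB h0 hxU
    obtain ⟨γ, ⟨hγ, hγa⟩, hc⟩ := (hUmem _).mp hxU
    have hS := hsurv a (hr a ha).1 m₀ hB h0
    rcases hc with h | h
    · exact hγa ((hcross a ha γ hγ _ m₀ a hS h0 haB ha0 h).1).symm
    · exact hγa ((hcross a ha γ hγ _ m₀ b hS h0 hbB hb h).1).symm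
  set E' : Set F := ({x : F | x ≠ 0} \ U) \ {r a * a, r a * b} with hE'def
  have hfiber : ∀ γ ∈ Ω, ∀ bv : Fin t → Bool, ∀ m, m ∈ finalState (r γ) V bv →
      m ≠ 0 → m ≠ a → m ≠ b → r γ * m ∈ E' := by
    intro γ hγ bv m hm hm0 hma hmb
    have hrγ := (hr γ hγ).1
    have hx0 : r γ * m ≠ 0 := mul_ne_zero hrγ hm0
    refine ⟨⟨hx0, fun hxU => ?_⟩, fun hxp => ?_⟩
    · obtain ⟨γ', ⟨hγ', _⟩, hc⟩ := (hUmem _).mp hxU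
      rcases hc with h | h
      · exact hma (hcross γ hγ γ' hγ' bv m a hm hm0 haB ha0 h).2
      · exact hmb (hcross γ hγ γ' hγ' bv m b hm hm0 hbB hb h).2
    · simp only [Set.mem_insert_iff, Set.mem_singleton_iff] at hxp
      rcases hxp with h | h
      · exact hma (hcross γ hγ a ha bv m a hm hm0 haB ha0 h).2
      · exact hmb (hcross γ hγ a ha bv m b hm hm0 hbB hb h).2
  -- finsets
  set ΩF : Finset F := (Set.toFinite Ω).toFinset with hΩF
  set B'F : Finset F := (Set.toFinite (B11 F \ {0})).toFinset with hB'F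
  set E'F : Finset F := (Set.toFinite E').toFinset with hE'Fdef
  set B11F : Finset F := (Set.toFinite (B11 F)).toFinset with hB11F
  -- the main counting inequality
  have hmain : ΩF.card * B'F.card ≤ 2 ^ t * (2 + E'F.card) := by
    set T : Finset (F ⊕ F) :=
      insert (Sum.inl a : F ⊕ F) (insert (Sum.inl b : F ⊕ F) (E'F.image (Sum.inr : F → F ⊕ F))) with hT
    have hinj : (ΩF ×ˢ B'F).card ≤ ((Finset.univ : Finset (Fin t → Bool)) ×ˢ T).card := by
      apply Finset.card_le_card_of_injOn
        (fun pr : F × F => ((fun i => decide (r pr.1 * pr.2 ∈ V i)),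
          if pr.2 = a ∨ pr.2 = b then Sum.inl pr.2 else Sum.inr (r pr.1 * pr.2)))
      · intro pr hpr
        rw [Finset.mem_coe, Finset.mem_product] at hpr
        have hγ : pr.1 ∈ Ω := (Set.Finite.mem_toFinset _).mp hpr.1
        have hm : pr.2 ∈ B11 F \ {0} := (Set.Finite.mem_toFinset _).mp hpr.2
        have hm0 : pr.2 ≠ 0 := by simpa using hm.2
        rw [Finset.mem_coe]
        beta_reduce
        rw [Finset.mem_product]
        refine ⟨Finset.mem_univ _, ?_⟩
        by_cases hP : pr.2 = a ∨ pr.2 = b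
        · rw [hT, if_pos hP]
          rcases hP with h | h
          · exact Finset.mem_insert.mpr (Or.inl (by rw [h]))
          · exact Finset.mem_insert.mpr
              (Or.inr (Finset.mem_insert.mpr (Or.inl (by rw [h]))))
        · push_neg at hP
          have hx : r pr.1 * pr.2 ∈ E' :=
            hfiber pr.1 hγ _ pr.2 (hsurv pr.1 (hr _ hγ).1 pr.2 hm.1 hm0) hm0 hP.1 hP.2
          have hx' : r pr.1 * pr.2 ∈ E'F := (Set.Finite.mem_toFinset _).mpr hx
          have hne : ¬(pr.2 = a ∨ pr.2 = b) := by
            rintro (h | h)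
            exacts [hP.1 h, hP.2 h]
          rw [hT, if_neg hne]
          refine Finset.mem_insert.mpr (Or.inr (Finset.mem_insert.mpr (Or.inr ?_)))
          exact Finset.mem_image.mpr ⟨_, hx', rfl⟩
      · intro pq hpq qr hqr heq
        simp only [Finset.coe_product, Set.mem_prod, Finset.mem_coe,
          Finset.mem_product] at hpq hqr
        have hγp : pq.1 ∈ Ω := (Set.Finite.mem_toFinset _).mp hpq.1
        have hγq : qr.1 ∈ Ω := (Set.Finite.mem_toFinset _).mp hqr.1
        have hmp' : pq.2 ∈ B11 F \ {0} := (Set.Finite.mem_toFinset _).mp hpq.2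
        have hmq' : qr.2 ∈ B11 F \ {0} := (Set.Finite.mem_toFinset _).mp hqr.2
        have hmp0 : pq.2 ≠ 0 := by simpa using hmp'.2
        have hmq0 : qr.2 ≠ 0 := by simpa using hmq'.2
        have hbveq := congrArg Prod.fst heq
        have hsnd := congrArg Prod.snd heq
        simp only at hbveq hsnd
        have hSp : pq.2 ∈ finalState (r pq.1) V (fun i => decide (r pq.1 * pq.2 ∈ V i)) :=
          hsurv pq.1 (hr _ hγp).1 pq.2 hmp'.1 hmp0
        have hSq : qr.2 ∈ finalState (r qr.1) V (fun i => decide (r pq.1 * pq.2 ∈ V i)) := by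
          rw [hbveq]
          exact hsurv qr.1 (hr _ hγq).1 qr.2 hmq'.1 hmq0
        have hγeq : pq.1 = qr.1 := huniq _ pq.1 hγp qr.1 hγq pq.2 qr.2 hSp hSq
        have hmeq : pq.2 = qr.2 := by
          by_cases hP : pq.2 = a ∨ pq.2 = b <;> by_cases hQ : qr.2 = a ∨ qr.2 = b
          · rw [if_pos hP, if_pos hQ] at hsnd
            exact Sum.inl.inj hsnd
          · rw [if_pos hP, if_neg hQ] at hsnd
            exact absurd hsnd (by simp)
          · rw [if_neg hP, if_pos hQ] at hsnd
            exact absurd hsnd (by simp)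
          · rw [if_neg hP, if_neg hQ] at hsnd
            have := Sum.inr.inj hsnd
            rw [hγeq] at this
            exact mul_left_cancel₀ (hr _ hγq).1 this
        exact Prod.ext hγeq hmeq
    have hTcard : T.card ≤ 2 + E'F.card := by
      rw [hT]
      refine le_trans (Finset.card_insert_le _ _) ?_
      have h2 : (insert (Sum.inl b : F ⊕ F) (E'F.image (Sum.inr : F → F ⊕ F))).card ≤ 1 + E'F.card := by
        refine le_trans (Finset.card_insert_le _ _) ?_
        have := Finset.card_image_le (s := E'F) (f := (Sum.inr : F → F ⊕ F))
        omega
      omega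
    calc ΩF.card * B'F.card = (ΩF ×ˢ B'F).card := (Finset.card_product _ _).symm
      _ ≤ ((Finset.univ : Finset (Fin t → Bool)) ×ˢ T).card := hinj
      _ = 2 ^ t * T.card := by
          have hcu : (Finset.univ : Finset (Fin t → Bool)).card = 2 ^ t := by
            rw [Finset.card_univ, Fintype.card_fun]
            simp
          rw [Finset.card_product, hcu]
      _ ≤ 2 ^ t * (2 + E'F.card) := Nat.mul_le_mul_left _ hTcard
  -- cardinality of E'
  have hcard_ne : ({x : F | x ≠ 0}).ncard = p ^ e - 1 := by
    have h1 : {x : F | x ≠ 0} = Set.univ \ {0} := by ext x; simp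
    rw [h1, Set.ncard_diff (Set.subset_univ _), Set.ncard_univ, Set.ncard_singleton,
      Nat.card_eq_fintype_card, hcard]
  have hUsub : U ⊆ {x : F | x ≠ 0} := by
    intro x hx
    obtain ⟨γ, ⟨hγ, _⟩, hc⟩ := (hUmem x).mp hx
    rcases hc with h | h <;> subst h
    · exact mul_ne_zero (hr γ hγ).1 ha0
    · exact mul_ne_zero (hr γ hγ).1 hb
  have hpairne : r a * a ≠ r a * b := fun h => hab (mul_left_cancel₀ (hr a ha).1 h)
  have hpairsub : ({r a * a, r a * b} : Set F) ⊆ {x : F | x ≠ 0} \ U := by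
    intro x hx
    simp only [Set.mem_insert_iff, Set.mem_singleton_iff] at hx
    rcases hx with h | h <;> subst h
    · exact ⟨mul_ne_zero (hr a ha).1 ha0, hnotU a haB ha0⟩
    · exact ⟨mul_ne_zero (hr a ha).1 hb, hnotU b hbB hb⟩
  have hE'card : E'.ncard = (p ^ e - 1) - U.ncard - 2 := by
    rw [hE'def, Set.ncard_diff hpairsub, Set.ncard_pair hpairne,
      Set.ncard_diff hUsub, hcard_ne]
  have hE'F : E'F.card = E'.ncard := (Set.ncard_eq_toFinset_card _ _).symm
  -- lower bound for B' via m ↦ m + m⁻¹ fibers, shared pieces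
  have hfibBB : ∀ (s : Finset F), (∀ x ∈ s, x ≠ 0) →
      ∀ x ∈ s, ∀ y ∈ s, x + x⁻¹ = y + y⁻¹ → y = x ∨ y = x⁻¹ := by
    intro s hs x hx y hy h
    exact add_inv_fiber (hs y hy) (hs x hx) h.symm
  constructor
  -- ===================== odd case =====================
  · intro hodd
    have hUcard : U.ncard = p ^ e - 3 := by
      rw [hUdef]
      exact (hunion a ha).1 hodd
    have hp3 : 3 ≤ p := by
      have hne2 : p ≠ 2 := by
        rintro rfl
        rw [Nat.odd_iff] at hodd
        omega
      have := hp.two_le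
      omega
    have hq3 : 3 ≤ p ^ e := le_trans hp3 (Nat.le_self_pow (by omega) p)
    have hE'0 : E'F.card = 0 := by rw [hE'F, hE'card, hUcard]; omega
    -- |Ω| lower bound
    have hΩQR : Ω = QR F := hΩodd hodd
    have hΩlb : p ^ e - 1 ≤ 2 * ΩF.card := by
      have hcle := card_le_two_mul_of_fibers (Finset.univ.erase (0 : F)) (fun x => x ^ 2)
        ΩF (fun x => -x) ?_ ?_
      · calc p ^ e - 1 = (Finset.univ.erase (0 : F)).card := by
              rw [Finset.card_erase_of_mem (Finset.mem_univ _), Finset.card_univ, hcard]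
          _ ≤ 2 * ΩF.card := hcle
      · intro x hx
        rw [hΩF, Set.Finite.mem_toFinset, hΩQR]
        exact ⟨x, (Finset.mem_erase.mp hx).1, rfl⟩
      · intro x hx y hy h
        have h3 : (y - x) * (y + x) = 0 := by linear_combination -h
        rcases mul_eq_zero.mp h3 with h4 | h4
        · exact Or.inl (sub_eq_zero.mp h4)
        · exact Or.inr (eq_neg_of_add_eq_zero_left h4)
    -- |B11 \ {0}| lower bound
    have h2B : (2 : F) ∈ B11 F := ⟨1, one_ne_zero, by norm_num⟩
    have hm2B : (-2 : F) ∈ B11 F := ⟨-1, by norm_num, by norm_num⟩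
    have h2m2 : (2 : F) ≠ -2 := by
      intro h
      exact h4ne hodd (by linear_combination h)
    have h1m1 : (1 : F) ≠ -1 := by
      intro h
      exact h2ne hodd (by linear_combination h)
    set X : Finset F := (B11F.erase 2).erase (-2) with hX
    have hXlb : p ^ e - 3 ≤ 2 * X.card := by
      set s' : Finset F := ((Finset.univ.erase (0 : F)).erase 1).erase (-1) with hs'
      have hs'mem : ∀ m ∈ s', m ≠ 0 ∧ m ≠ 1 ∧ m ≠ -1 := by
        intro m hm
        rw [hs', Finset.mem_erase, Finset.mem_erase, Finset.mem_erase] at hm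
        exact ⟨hm.2.2.1, hm.2.1, hm.1⟩
      have hcle := card_le_two_mul_of_fibers s' (fun m => m + m⁻¹) X (fun m => m⁻¹) ?_ ?_
      · have hs'card : s'.card = p ^ e - 3 := by
          rw [hs']
          rw [Finset.card_erase_of_mem, Finset.card_erase_of_mem,
            Finset.card_erase_of_mem (Finset.mem_univ _), Finset.card_univ, hcard]
          · omega
          · rw [Finset.mem_erase]
            exact ⟨one_ne_zero, Finset.mem_univ _⟩
          · rw [Finset.mem_erase, Finset.mem_erase]
            refine ⟨fun h => h1m1 h.symm, neg_ne_zero.mpr one_ne_zero, Finset.mem_univ _⟩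
        rw [← hs'card]
        exact hcle
      · intro m hm
        obtain ⟨hm0, hm1, hmm1⟩ := hs'mem m hm
        have hval2 : m + m⁻¹ ≠ 2 := by
          intro h
          apply hm1
          have hmm : m * m + 1 = m * 2 := by
            have h' : m * (m + m⁻¹) = m * 2 := by rw [h]
            rw [mul_add, mul_inv_cancel₀ hm0] at h'
            exact h'
          have : (m - 1) ^ 2 = 0 := by linear_combination hmm
          have h0 := pow_eq_zero_iff (two_ne_zero) |>.mp this
          exact sub_eq_zero.mp h0
        have hvalm2 : m + m⁻¹ ≠ -2 := by
          intro h
          apply hmm1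
          have hmm : m * m + 1 = m * (-2) := by
            have h' : m * (m + m⁻¹) = m * (-2) := by rw [h]
            rw [mul_add, mul_inv_cancel₀ hm0] at h'
            exact h'
          have hsq : (m + 1) ^ 2 = 0 := by linear_combination hmm
          have h0 := pow_eq_zero_iff (two_ne_zero) |>.mp hsq
          linear_combination h0
        rw [hX, Finset.mem_erase, Finset.mem_erase, hB11F, Set.Finite.mem_toFinset]
        exact ⟨hvalm2, hval2, ⟨m, hm0, rfl⟩⟩
      · intro x hx y hy h
        exact add_inv_fiber (hs'mem y hy).1 (hs'mem x hx).1 h.symm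
    have h2B' : (2 : F) ∈ B11F := by rw [hB11F, Set.Finite.mem_toFinset]; exact h2B
    have hm2B' : (-2 : F) ∈ B11F := by rw [hB11F, Set.Finite.mem_toFinset]; exact hm2B
    have hXcard : X.card = B11F.card - 1 - 1 := by
      rw [hX, Finset.card_erase_of_mem, Finset.card_erase_of_mem h2B']
      rw [Finset.mem_erase]
      exact ⟨fun h => h2m2 h.symm, hm2B'⟩
    have hB2 : 2 ≤ B11F.card := by
      have hsubp : ({2, -2} : Finset F) ⊆ B11F := by
        intro z hz
        rw [Finset.mem_insert, Finset.mem_singleton] at hz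
        rcases hz with h | h <;> subst h
        · exact h2B'
        · exact hm2B'
      calc 2 = ({2, -2} : Finset F).card := by
            rw [Finset.card_insert_of_notMem (by simp [h2m2]), Finset.card_singleton]
        _ ≤ B11F.card := Finset.card_le_card hsubp
    have hB'B : B11F.card - 1 ≤ B'F.card := by
      have hsubp : B11F.erase 0 ⊆ B'F := by
        intro z hz
        rw [Finset.mem_erase, hB11F, Set.Finite.mem_toFinset] at hz
        rw [hB'F, Set.Finite.mem_toFinset]
        exact ⟨hz.2, by simpa using hz.1⟩
      exact le_trans Finset.pred_card_le_card_erase (Finset.card_le_card hsubp)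
    have hB'lb : p ^ e - 1 ≤ 2 * B'F.card := by omega
    -- final counting inequality
    have hfin : (p ^ e - 1) * (p ^ e - 1) ≤ 2 ^ (t + 3) := by
      calc (p ^ e - 1) * (p ^ e - 1) ≤ (2 * ΩF.card) * (2 * B'F.card) :=
            Nat.mul_le_mul hΩlb hB'lb
        _ = 4 * (ΩF.card * B'F.card) := by ring
        _ ≤ 4 * (2 ^ t * (2 + E'F.card)) := Nat.mul_le_mul_left _ hmain
        _ = 2 ^ (t + 3) := by rw [hE'0, pow_add]; ring
    -- pass to the reals
    have hcastn : (((p ^ e - 1 : ℕ) : ℝ)) = (p : ℝ) ^ e - 1 := by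
      rw [Nat.cast_sub (by omega : 1 ≤ p ^ e)]
      push_cast
      ring
    have hreal : ((p ^ e - 1 : ℕ) : ℝ) * ((p ^ e - 1 : ℕ) : ℝ) ≤ (2 : ℝ) ^ (t + 3) := by
      exact_mod_cast hfin
    have hnpos : (0 : ℝ) < ((p ^ e - 1 : ℕ) : ℝ) := by
      have : (2 : ℝ) ≤ ((p ^ e - 1 : ℕ) : ℝ) := by exact_mod_cast (by omega : 2 ≤ p ^ e - 1)
      linarith
    have hlog := (Real.logb_le_logb (by norm_num : (1 : ℝ) < 2)
      (by positivity) (by positivity)).mpr hreal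
    rw [show ((p ^ e - 1 : ℕ) : ℝ) * ((p ^ e - 1 : ℕ) : ℝ) = ((p ^ e - 1 : ℕ) : ℝ) ^ 2 by ring,
      Real.logb_pow, show ((2 : ℝ) ^ (t + 3)) = (2 : ℝ) ^ ((t + 3 : ℕ)) by norm_cast,
      Real.logb_pow, Real.logb_self_eq_one (by norm_num : (1 : ℝ) < 2)] at hlog
    rw [← hcastn]
    push_cast at hlog
    linarith
  -- ===================== even case =====================
  · intro hp2
    have he3 : 3 ≤ e := by
      rcases hcase with ⟨hodd, -⟩ | ⟨-, h⟩
      · rw [hp2, Nat.odd_iff] at hodd; omega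
      · exact h
    obtain ⟨ω, hωord, -, hΩW⟩ := hΩeven hp2
    have h2F : (2 : F) = 0 := h2eq hp2
    have hqe : p ^ e = 2 ^ e := by rw [hp2]
    have hpow : 2 * 2 ^ (e - 1) = 2 ^ e := by
      rw [← pow_succ']
      congr 1
      omega
    have h4le : 4 ≤ 2 ^ (e - 1) := by
      calc (4 : ℕ) = 2 ^ 2 := rfl
        _ ≤ 2 ^ (e - 1) := Nat.pow_le_pow_right (by norm_num) (by omega)
    have hq8 : 8 ≤ p ^ e := by
      rw [hqe]
      calc (8 : ℕ) = 2 ^ 3 := rfl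
        _ ≤ 2 ^ e := Nat.pow_le_pow_right (by norm_num) he3
    have hUcard : U.ncard = p ^ e - 4 := by
      rw [hUdef]
      exact (hunion a ha).2 hp2
    have hE'1 : E'F.card = 1 := by rw [hE'F, hE'card, hUcard]; omega
    -- |Ω| lower bound
    have hΩlb : p ^ e - 2 ≤ 2 * ΩF.card := by
      have hinj2 : (Finset.range (2 ^ (e - 1) - 1)).card ≤ ΩF.card := by
        apply Finset.card_le_card_of_injOn (fun i => ω ^ (2 * i))
        · intro i hi
          rw [Finset.mem_coe, Finset.mem_range] at hi
          rw [Finset.mem_coe, hΩF, Set.Finite.mem_toFinset, hΩW]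
          exact ⟨i, by omega, rfl⟩
        · intro i hi j hj hij
          simp only [Finset.coe_range, Set.mem_Iio] at hi hj
          have h2i : 2 * i < orderOf ω := by rw [hωord, hqe]; omega
          have h2j : 2 * j < orderOf ω := by rw [hωord, hqe]; omega
          have := pow_injOn_Iio_orderOf (Set.mem_Iio.mpr h2i) (Set.mem_Iio.mpr h2j) hij
          omega
      rw [Finset.card_range] at hinj2
      omega
    -- |B11 \ {0}| lower bound
    have hB'lb : p ^ e - 2 ≤ 2 * B'F.card := by
      set s' : Finset F := (Finset.univ.erase (0 : F)).erase 1 with hs'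
      have hs'mem : ∀ m ∈ s', m ≠ 0 ∧ m ≠ 1 := by
        intro m hm
        rw [hs', Finset.mem_erase, Finset.mem_erase] at hm
        exact ⟨hm.2.1, hm.1⟩
      have hcle := card_le_two_mul_of_fibers s' (fun m => m + m⁻¹) B'F (fun m => m⁻¹) ?_ ?_
      · have hs'card : s'.card = p ^ e - 2 := by
          rw [hs', Finset.card_erase_of_mem, Finset.card_erase_of_mem (Finset.mem_univ _),
            Finset.card_univ, hcard]
          · omega
          · rw [Finset.mem_erase]
            exact ⟨one_ne_zero, Finset.mem_univ _⟩
        omega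
      · intro m hm
        obtain ⟨hm0, hm1⟩ := hs'mem m hm
        have hval0 : m + m⁻¹ ≠ 0 := by
          intro h
          apply hm1
          have hmm : m * m + 1 = m * 0 := by
            have h' : m * (m + m⁻¹) = m * 0 := by rw [h]
            rw [mul_add, mul_inv_cancel₀ hm0] at h'
            exact h'
          have hsq : (m - 1) ^ 2 = 0 := by linear_combination hmm - m * h2F
          have h0 := pow_eq_zero_iff (two_ne_zero) |>.mp hsq
          exact sub_eq_zero.mp h0
        rw [hB'F, Set.Finite.mem_toFinset]
        exact ⟨⟨m, hm0, rfl⟩, by simpa using hval0⟩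
      · intro x hx y hy h
        exact add_inv_fiber (hs'mem y hy).1 (hs'mem x hx).1 h.symm
    -- final counting inequality
    have hfin : (p ^ e - 2) * (p ^ e - 2) ≤ 2 ^ (t + 4) := by
      calc (p ^ e - 2) * (p ^ e - 2) ≤ (2 * ΩF.card) * (2 * B'F.card) :=
            Nat.mul_le_mul hΩlb hB'lb
        _ = 4 * (ΩF.card * B'F.card) := by ring
        _ ≤ 4 * (2 ^ t * (2 + E'F.card)) := Nat.mul_le_mul_left _ hmain
        _ = 12 * 2 ^ t := by rw [hE'1]; ring
        _ ≤ 16 * 2 ^ t := Nat.mul_le_mul_right _ (by norm_num)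
        _ = 2 ^ (t + 4) := by rw [pow_add]; ring
    -- pass to the reals
    have hcastn : (((p ^ e - 2 : ℕ) : ℝ)) = (p : ℝ) ^ e - 2 := by
      rw [Nat.cast_sub (by omega : 2 ≤ p ^ e)]
      push_cast
      ring
    have hreal : ((p ^ e - 2 : ℕ) : ℝ) * ((p ^ e - 2 : ℕ) : ℝ) ≤ (2 : ℝ) ^ (t + 4) := by
      exact_mod_cast hfin
    have hnpos : (0 : ℝ) < ((p ^ e - 2 : ℕ) : ℝ) := by
      have : (2 : ℝ) ≤ ((p ^ e - 2 : ℕ) : ℝ) := by exact_mod_cast (by omega : 2 ≤ p ^ e - 2)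
      linarith
    have hlog := (Real.logb_le_logb (by norm_num : (1 : ℝ) < 2)
      (by positivity) (by positivity)).mpr hreal
    rw [show ((p ^ e - 2 : ℕ) : ℝ) * ((p ^ e - 2 : ℕ) : ℝ) = ((p ^ e - 2 : ℕ) : ℝ) ^ 2 by ring,
      Real.logb_pow, show ((2 : ℝ) ^ (t + 4)) = (2 : ℝ) ^ ((t + 4 : ℕ)) by norm_cast,
      Real.logb_pow, Real.logb_self_eq_one (by norm_num : (1 : ℝ) < 2)] at hlog
    rw [← hcastn]
    push_cast at hlog
    linarith
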